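/- arXiv:1904.12775 — 3 statements merged into one kernel-verified Lean document; each statement's English description precedes it below -/
import Mathlib

section
/- If E is a random matrix whose distribution is invariant under the sign-flip group R, and g is injective on every orbit {RE* : R ∈ R} where E* has no zero rows, and E almost surely has no zero rows, then p(E) = |{R ∈ R : g(RE) ≥ g(E)}|/2^n is uniformly distributed on {1/2^n, 2/2^n, ..., 1}. -/
open MeasureTheory Matrix
open scoped ENNReal

instance matrixMeasurableSpace (m k : Type*) : MeasurableSpace (Matrix m k ℝ) :=
  MeasurableSpace.pi

/-- The diagonal sign matrix associated to a sign pattern `s`. -/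
noncomputable def signMat {n : ℕ} (s : Fin n → Bool) : Matrix (Fin n) (Fin n) ℝ :=
  Matrix.diagonal fun i => if s i then (1 : ℝ) else -1

lemma signMat_mul_apply {n p : ℕ} (s : Fin n → Bool) (A : Matrix (Fin n) (Fin p) ℝ)
    (i : Fin n) (j : Fin p) :
    (signMat s * A) i j = (if s i then (1:ℝ) else -1) * A i j := by
  simp [signMat, Matrix.diagonal_mul]

lemma signMat_mul_signMat {n : ℕ} (s t : Fin n → Bool) :
    signMat s * signMat t = signMat (fun i => s i == t i) := by
  funext i j
  rw [signMat_mul_apply]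
  simp only [signMat, Matrix.diagonal_apply]
  by_cases hij : i = j
  · subst hij
    rcases Bool.dichotomy (s i) with hs|hs <;> rcases Bool.dichotomy (t i) with ht|ht <;>
      simp [hs, ht]
  · simp [hij]

lemma signMat_mul_inj {n p : ℕ} {A : Matrix (Fin n) (Fin p) ℝ}
    (hA : ∀ i, ∃ j, A i j ≠ 0) :
    Function.Injective (fun s : Fin n → Bool => signMat s * A) := by
  intro s t h
  funext i
  obtain ⟨j, hj⟩ := hA i
  have h1 : (signMat s * A) i j = (signMat t * A) i j := congrFun (congrFun h i) j
  rw [signMat_mul_apply, signMat_mul_apply] at h1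
  have h2 : (if s i then (1:ℝ) else -1) = (if t i then 1 else -1) :=
    mul_right_cancel₀ hj h1
  rcases Bool.dichotomy (s i) with hs|hs <;> rcases Bool.dichotomy (t i) with ht|ht <;>
    rw [hs, ht] at h2 ⊢ <;> norm_num at h2

lemma measurable_signMat_mul {n p : ℕ} (s : Fin n → Bool) :
    Measurable (fun A : Matrix (Fin n) (Fin p) ℝ => signMat s * A) := by
  apply measurable_pi_lambda; intro i; apply measurable_pi_lambda; intro j
  simp only [signMat_mul_apply]
  exact measurable_const.mul ((measurable_pi_apply j).comp (measurable_pi_apply i))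

noncomputable def rnk {n p : ℕ} (g : Matrix (Fin n) (Fin p) ℝ → ℝ)
    (A : Matrix (Fin n) (Fin p) ℝ) : ℕ :=
  (Finset.univ.filter fun s : Fin n → Bool => g A ≤ g (signMat s * A)).card

lemma measurable_rnk {n p : ℕ} {g : Matrix (Fin n) (Fin p) ℝ → ℝ} (hg : Measurable g) :
    Measurable (rnk g) := by
  have : rnk g = fun A => ∑ s : Fin n → Bool,
      if g A ≤ g (signMat s * A) then 1 else 0 := by
    funext A; rw [rnk, Finset.card_filter]
  rw [this]
  apply Finset.measurable_sum
  intro s _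
  exact Measurable.ite (measurableSet_le hg (hg.comp (measurable_signMat_mul s)))
    measurable_const measurable_const

lemma bool_xnor_invol {n : ℕ} (t : Fin n → Bool) (s : Fin n → Bool) :
    (fun i => ((fun i => s i == t i) i) == t i) = s := by
  funext i
  rcases Bool.dichotomy (s i) with hs|hs <;> rcases Bool.dichotomy (t i) with ht|ht <;>
    simp [hs, ht]

/-- For a matrix with no zero rows, the set of sign patterns giving rank `k` has exactly
one element, for each `k ∈ [1, 2^n]`. -/
lemma count_rank_eq_one {n p : ℕ} (g : Matrix (Fin n) (Fin p) ℝ → ℝ)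
    (A : Matrix (Fin n) (Fin p) ℝ) (hA : ∀ i, ∃ j, A i j ≠ 0)
    (hinj : Set.InjOn g {B | ∃ s : Fin n → Bool, B = signMat s * A})
    (k : ℕ) (hk : k ∈ Finset.Icc 1 (2 ^ n)) :
    (Finset.univ.filter fun t : Fin n → Bool => rnk g (signMat t * A) = k).card = 1 := by
  classical
  set V : (Fin n → Bool) → ℝ := fun t => g (signMat t * A) with hV
  have hVinj : Function.Injective V := by
    intro a b hab
    exact signMat_mul_inj hA (hinj ⟨a, rfl⟩ ⟨b, rfl⟩ hab)
  set F : (Fin n → Bool) → ℕ := fun t => (Finset.univ.filter fun u => V t ≤ V u).card with hF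
  have hrnkF : ∀ t, rnk g (signMat t * A) = F t := by
    intro t
    rw [rnk, hF]
    have hrw : ∀ s : Fin n → Bool, signMat s * (signMat t * A)
        = signMat (fun i => s i == t i) * A := by
      intro s; rw [← Matrix.mul_assoc, signMat_mul_signMat]
    simp only [hrw]
    apply Finset.card_bij' (fun s _ => fun i => s i == t i) (fun s _ => fun i => s i == t i)
    · intro s hs
      simp only [Finset.mem_filter, Finset.mem_univ, true_and] at hs ⊢
      exact hs
    · intro s hs
      simp only [Finset.mem_filter, Finset.mem_univ, true_and] at hs ⊢
      rw [bool_xnor_invol t s]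
      exact hs
    · intro s hs; exact bool_xnor_invol t s
    · intro s hs; exact bool_xnor_invol t s
  -- F is strictly "anti" in V, hence injective
  have hanti : ∀ a b, V a < V b → F b < F a := by
    intro a b hab
    apply Finset.card_lt_card
    constructor
    · intro u hu
      simp only [Finset.mem_filter, Finset.mem_univ, true_and] at hu ⊢
      exact le_trans (le_of_lt hab) hu
    · intro hsub
      have := hsub (by simp : a ∈ Finset.univ.filter fun u => V a ≤ V u)
      simp only [Finset.mem_filter, Finset.mem_univ, true_and] at this
      exact absurd this (not_le.mpr hab)
  have hFinj : Function.Injective F := by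
    intro a b hab
    by_contra hne
    rcases lt_or_gt_of_ne (fun h => hne (hVinj h)) with h | h
    · exact absurd hab (Nat.ne_of_gt (hanti a b h))
    · exact absurd hab (Nat.ne_of_lt (hanti b a h))
  have hcardfun : Fintype.card (Fin n → Bool) = 2 ^ n := by simp
  have hFmem : ∀ t, F t ∈ Finset.Icc 1 (2 ^ n) := by
    intro t
    simp only [Finset.mem_Icc]
    constructor
    · rw [Nat.one_le_iff_ne_zero, ← Nat.pos_iff_ne_zero, Finset.card_pos]
      exact ⟨t, by simp⟩
    · calc F t ≤ Finset.univ.card := Finset.card_filter_le _ _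
        _ = 2 ^ n := by rw [Finset.card_univ, hcardfun]
  have himg : Finset.univ.image F = Finset.Icc 1 (2 ^ n) := by
    apply Finset.eq_of_subset_of_card_le
    · intro x hx
      simp only [Finset.mem_image] at hx
      obtain ⟨t, _, rfl⟩ := hx
      exact hFmem t
    · rw [Finset.card_image_of_injective _ hFinj, Finset.card_univ, hcardfun,
        Nat.card_Icc]
      omega
  have hkimg : k ∈ Finset.univ.image F := himg ▸ hk
  simp only [Finset.mem_image] at hkimg
  obtain ⟨t0, _, ht0⟩ := hkimg
  rw [Finset.card_eq_one]
  refine ⟨t0, ?_⟩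
  ext t
  simp only [Finset.mem_filter, Finset.mem_univ, true_and, Finset.mem_singleton, hrnkF]
  constructor
  · intro h; exact hFinj (h.trans ht0.symm)
  · intro h; rw [h, ht0]

/-- If the distribution of E is invariant under the sign-flip group, g is injective on
every orbit {R E* : R} whose representative E* has no zero rows, and E almost surely has
no zero rows, then the randomization p-value `p(E) = |{R : g(RE) ≥ g(E)}| / 2^n` is
uniformly distributed on {1/2^n, 2/2^n, ..., 1}. -/
theorem randomization_pvalue_uniform
    {Ω : Type*} [MeasurableSpace Ω] (P : Measure Ω) [IsProbabilityMeasure P]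
    {n p : ℕ} (E : Ω → Matrix (Fin n) (Fin p) ℝ) (hE : Measurable E)
    (hinv : ∀ s : Fin n → Bool,
      P.map (fun ω => signMat s * E ω) = P.map E)
    (g : Matrix (Fin n) (Fin p) ℝ → ℝ) (hg : Measurable g)
    (hinj : ∀ A : Matrix (Fin n) (Fin p) ℝ, (∀ i, ∃ j, A i j ≠ 0) →
      Set.InjOn g {B | ∃ s : Fin n → Bool, B = signMat s * A})
    (hrows : ∀ᵐ ω ∂P, ∀ i, ∃ j, E ω i j ≠ 0)
    (pval : Ω → ℝ)
    (hpval : ∀ ω, pval ω =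
      ((Finset.univ.filter fun s : Fin n → Bool =>
          g (E ω) ≤ g (signMat s * E ω)).card : ℝ) / 2 ^ n) :
    ∀ k : ℕ, k ∈ Finset.Icc 1 (2 ^ n) → P {ω | pval ω = (k : ℝ) / 2 ^ n} = ((2 ^ n : ℝ≥0∞))⁻¹ := by
  intro k hk
  classical
  set S : Set (Matrix (Fin n) (Fin p) ℝ) := {A | rnk g A = k} with hSdef
  have hS : MeasurableSet S := (measurable_rnk hg) (measurableSet_singleton k)
  -- identify the event with the preimage of S
  have hev : {ω | pval ω = (k : ℝ) / 2 ^ n} = E ⁻¹' S := by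
    ext ω
    simp only [Set.mem_setOf_eq, Set.mem_preimage, hSdef, hpval ω, rnk]
    rw [div_eq_div_iff (by positivity) (by positivity),
      mul_left_inj' (by positivity : ((2:ℝ)^n) ≠ 0), Nat.cast_inj]
  -- each sign-flipped copy has the same probability
  have hmt : ∀ t : Fin n → Bool, Measurable fun ω => signMat t * E ω :=
    fun t => (measurable_signMat_mul t).comp hE
  have heach : ∀ t : Fin n → Bool,
      P ((fun ω => signMat t * E ω) ⁻¹' S) = P (E ⁻¹' S) := by
    intro t
    rw [← Measure.map_apply (hmt t) hS, hinv t, Measure.map_apply hE hS]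
  -- the sum over all sign patterns is 1
  have hsum : ∑ t : Fin n → Bool, P ((fun ω => signMat t * E ω) ⁻¹' S) = 1 := by
    have h1 : ∀ t : Fin n → Bool, P ((fun ω => signMat t * E ω) ⁻¹' S)
        = ∫⁻ ω, (if rnk g (signMat t * E ω) = k then (1:ℝ≥0∞) else 0) ∂P := by
      intro t
      rw [← lintegral_indicator_one ((hmt t) hS)]
      apply lintegral_congr
      intro ω
      rw [Set.indicator_apply]
      simp [hSdef]
    simp only [h1]
    rw [← lintegral_finset_sum]
    · have : ∀ᵐ ω ∂P, ∑ t : Fin n → Bool,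
          (if rnk g (signMat t * E ω) = k then (1:ℝ≥0∞) else 0) = 1 := by
        filter_upwards [hrows] with ω hω
        rw [Finset.sum_boole]
        rw [count_rank_eq_one g (E ω) hω (hinj (E ω) hω) k hk]
        norm_num
      rw [lintegral_congr_ae this, lintegral_one, measure_univ]
    · intro t _
      exact Measurable.ite
        (((measurable_rnk hg).comp (hmt t)) (measurableSet_singleton k))
        measurable_const measurable_const
  -- conclude
  have hcardfun : Fintype.card (Fin n → Bool) = 2 ^ n := by simp
  rw [Finset.sum_congr rfl (fun t _ => heach t), Finset.sum_const, Finset.card_univ,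
    hcardfun] at hsum
  rw [hev]
  have h2n : ((2:ℝ≥0∞) ^ n) ≠ 0 := by positivity
  have h2ntop : ((2:ℝ≥0∞) ^ n) ≠ ⊤ := by
    exact ENNReal.pow_ne_top (by norm_num)
  calc P (E ⁻¹' S) = (2 ^ n : ℝ≥0∞)⁻¹ * ((2 ^ n : ℕ) • P (E ⁻¹' S)) := by
        rw [nsmul_eq_mul, ← mul_assoc]
        push_cast
        rw [ENNReal.inv_mul_cancel h2n h2ntop, one_mul]
    _ = (2 ^ n : ℝ≥0∞)⁻¹ := by rw [hsum, mul_one]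
end

section
/- Let R^M consist of the identity matrix together with M-1 elements drawn uniformly at random without replacement from R \ {I}, independent of E, where E's distribution is invariant under R. Then the subsampled p-value p_M(E) = |{R ∈ R^M : g(RE) ≥ g(E)}|/M satisfies P(p_M(E) ≤ α) ≤ α for all α ∈ [0,1]. -/
open MeasureTheory Matrix ProbabilityTheory
open scoped ENNReal

instance finsetSignMeasurableSpace (n : ℕ) : MeasurableSpace (Finset (Fin n → Bool)) := ⊤

namespace SubsampleAux

open Finset


def gmul {n : ℕ} (a b : Fin n → Bool) : Fin n → Bool := fun i => a i == b i

lemma gmul_gmul {n : ℕ} (a b : Fin n → Bool) : gmul a (gmul a b) = b := by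
  funext i; simp only [gmul]; cases a i <;> cases b i <;> rfl

lemma gmul_gmul_right {n : ℕ} (a b : Fin n → Bool) : gmul (gmul a b) a = b := by
  funext i; simp only [gmul]; cases a i <;> cases b i <;> rfl

lemma gmul_self {n : ℕ} (a : Fin n → Bool) : gmul a a = fun _ => true := by
  funext i; simp only [gmul]; cases a i <;> rfl

lemma gmul_id {n : ℕ} (a : Fin n → Bool) : gmul a (fun _ => true) = a := by
  funext i; simp only [gmul]; cases a i <;> rfl

lemma gmul_injective {n : ℕ} (a : Fin n → Bool) : Function.Injective (gmul a) :=
  Function.LeftInverse.injective (gmul_gmul a)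

lemma signMat_mul {n p : ℕ} (s t : Fin n → Bool) (x : Matrix (Fin n) (Fin p) ℝ) :
    signMat s * (signMat t * x) = signMat (gmul s t) * x := by
  have h : signMat s * signMat t = signMat (gmul s t) := by
    unfold signMat
    rw [Matrix.diagonal_mul_diagonal]
    have h2 : ∀ i, ((if s i = true then (1:ℝ) else -1) * if t i = true then 1 else -1)
        = if gmul s t i = true then (1:ℝ) else -1 := by
      intro i; simp only [gmul]
      rcases Bool.dichotomy (s i) with hs | hs <;> rcases Bool.dichotomy (t i) with ht | ht <;>
        simp only [hs, ht] <;> norm_num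
    simp only [h2]
  rw [← Matrix.mul_assoc, h]

lemma measurable_signMat_mul {n p : ℕ} (s : Fin n → Bool) :
    Measurable fun x : Matrix (Fin n) (Fin p) ℝ => signMat s * x := by
  apply measurable_pi_lambda; intro i
  apply measurable_pi_lambda; intro j
  have h : (fun x : Matrix (Fin n) (Fin p) ℝ => (signMat s * x) i j)
      = fun x => (if s i then (1:ℝ) else -1) * x i j := by
    funext x; simp [signMat, Matrix.diagonal_mul]
  rw [h]
  have hm : Measurable fun x : Matrix (Fin n) (Fin p) ℝ => x i j :=
    (measurable_pi_apply j).comp (measurable_pi_apply i)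
  exact hm.const_mul _

lemma rank_bound {σ : Type*} [DecidableEq σ] (A : Finset σ) (v : σ → ℝ) (k : ℝ) (hk : 0 ≤ k) :
    ((A.filter fun a => ((A.filter fun b => v a ≤ v b).card : ℝ) ≤ k).card : ℝ) ≤ k := by
  set A' := A.filter fun a => ((A.filter fun b => v a ≤ v b).card : ℝ) ≤ k with hA'
  rcases A'.eq_empty_or_nonempty with h | h
  · simp [h, hk]
  · obtain ⟨a₀, ha₀, hmin⟩ := A'.exists_min_image v h
    have hsub : A' ⊆ A.filter fun b => v a₀ ≤ v b := by
      intro a ha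
      exact Finset.mem_filter.mpr ⟨Finset.mem_of_mem_filter a ha, hmin a ha⟩
    have h1 : (A'.card : ℝ) ≤ ((A.filter fun b => v a₀ ≤ v b).card : ℝ) := by
      exact_mod_cast Finset.card_le_card hsub
    have h2 := (Finset.mem_filter.mp ha₀).2
    linarith

lemma double_count {σ : Type*} [DecidableEq σ] [Fintype σ] (M : ℕ)
    (e : σ) (m : σ → σ → σ) (hinv : ∀ a b, m a (m a b) = b)
    (hid : ∀ a, m a a = e) (hme : ∀ a, m a e = a)
    (f : Finset σ → ℝ≥0∞) :
    (Fintype.card σ : ℝ≥0∞) * ∑ T ∈ univ.filter (fun T : Finset σ => e ∈ T ∧ T.card = M), f T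
      = ∑ A ∈ univ.filter (fun A : Finset σ => A.card = M), ∑ a ∈ A, f (A.image (m a)) := by
  have inj : ∀ a : σ, Function.Injective (m a) := fun a =>
    Function.LeftInverse.injective (hinv a)
  have hcomp : ∀ a : σ, m a ∘ m a = id := fun a => funext (hinv a)
  rw [eq_comm]
  calc ∑ A ∈ univ.filter (fun A : Finset σ => A.card = M), ∑ a ∈ A, f (A.image (m a))
      = ∑ A ∈ univ.filter (fun A : Finset σ => A.card = M), ∑ a : σ,
          if a ∈ A then f (A.image (m a)) else 0 := by
        refine Finset.sum_congr rfl fun A _ => ?_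
        rw [Finset.sum_ite_mem, Finset.univ_inter]
    _ = ∑ a : σ, ∑ A ∈ univ.filter (fun A : Finset σ => A.card = M),
          if a ∈ A then f (A.image (m a)) else 0 := Finset.sum_comm
    _ = ∑ _a : σ, ∑ T ∈ univ.filter (fun T : Finset σ => e ∈ T ∧ T.card = M), f T := ?_
    _ = (Fintype.card σ : ℝ≥0∞)
          * ∑ T ∈ univ.filter (fun T : Finset σ => e ∈ T ∧ T.card = M), f T := by
        rw [Finset.sum_const, nsmul_eq_mul, Finset.card_univ]
  refine Finset.sum_congr rfl fun a _ => ?_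
  rw [← Finset.sum_filter]
  refine Finset.sum_bij (fun A _ => A.image (m a)) ?_ ?_ ?_ ?_
  · intro A hA
    simp only [Finset.mem_filter, Finset.mem_univ, true_and] at hA ⊢
    obtain ⟨hcard, ha⟩ := hA
    constructor
    · have := Finset.mem_image_of_mem (m a) ha; rwa [hid] at this
    · rw [Finset.card_image_of_injective _ (inj a), hcard]
  · intro A hA B hB h
    have h2 := congrArg (Finset.image (m a)) h
    rwa [Finset.image_image, Finset.image_image, hcomp, Finset.image_id, Finset.image_id] at h2
  · intro T hT
    simp only [Finset.mem_filter, Finset.mem_univ, true_and] at hT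
    refine ⟨T.image (m a), ?_, ?_⟩
    · simp only [Finset.mem_filter, Finset.mem_univ, true_and]
      constructor
      · rw [Finset.card_image_of_injective _ (inj a), hT.2]
      · have := Finset.mem_image_of_mem (m a) hT.1; rwa [hme] at this
    · show (T.image (m a)).image (m a) = T
      rw [Finset.image_image, hcomp, Finset.image_id]
  · intros; rfl

end SubsampleAux

/-- Let `R^M` (encoded by the random finite set `S` of sign patterns) consist of the
identity together with M−1 elements drawn uniformly at random without replacement from
the remaining sign matrices, independently of E, whose distribution is invariant under
sign flips. Then the subsampled p-value `p_M(E) = |{R ∈ R^M : g(RE) ≥ g(E)}| / M`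
satisfies `P(p_M(E) ≤ α) ≤ α` for all α ∈ [0,1]. -/
theorem subsampled_randomization_pvalue_valid
    {Ω : Type*} [MeasurableSpace Ω] (P : Measure Ω) [IsProbabilityMeasure P]
    {n p : ℕ} (E : Ω → Matrix (Fin n) (Fin p) ℝ) (hE : Measurable E)
    (hinv : ∀ s : Fin n → Bool, P.map (fun ω => signMat s * E ω) = P.map E)
    (g : Matrix (Fin n) (Fin p) ℝ → ℝ) (hg : Measurable g)
    (M : ℕ) (hM : 1 ≤ M) (hM' : M ≤ 2 ^ n)
    (S : Ω → Finset (Fin n → Bool)) (hS : Measurable S)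
    -- each realization of S contains the identity pattern and has exactly M elements
    (hSvalid : ∀ ω, (fun _ => true) ∈ S ω ∧ (S ω).card = M)
    -- S is uniformly distributed over all such sets (sampling without replacement)
    (hSunif : ∀ T T' : Finset (Fin n → Bool),
      (fun _ => true) ∈ T → T.card = M → (fun _ => true) ∈ T' → T'.card = M →
      P {ω | S ω = T} = P {ω | S ω = T'})
    -- S is independent of E
    (hindep : IndepFun S E P)
    (pvalM : Ω → ℝ)
    (hpvalM : ∀ ω, pvalM ω =
      (((S ω).filter fun s => g (E ω) ≤ g (signMat s * E ω)).card : ℝ) / M)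
    (α : ℝ) (hα0 : 0 ≤ α) (hα1 : α ≤ 1) :
    P {ω | pvalM ω ≤ α} ≤ ENNReal.ofReal α := by
  classical
  set μ : Measure (Matrix (Fin n) (Fin p) ℝ) := P.map E with hμ
  have hμprob : IsProbabilityMeasure μ := Measure.isProbabilityMeasure_map hE.aemeasurable
  set B : Finset (Fin n → Bool) → Set (Matrix (Fin n) (Fin p) ℝ) :=
    fun T => {x | ((T.filter fun s => g x ≤ g (signMat s * x)).card : ℝ) ≤ α * M} with hB
  have hBmeas : ∀ T, MeasurableSet (B T) := by
    intro T
    have hf : Measurable fun x : Matrix (Fin n) (Fin p) ℝ =>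
        ∑ s ∈ T, if g x ≤ g (signMat s * x) then (1:ℝ) else 0 := by
      apply Finset.measurable_sum
      intro s _
      exact Measurable.ite
        (measurableSet_le hg (hg.comp (SubsampleAux.measurable_signMat_mul s)))
        measurable_const measurable_const
    have heq : B T = (fun x => ∑ s ∈ T, if g x ≤ g (signMat s * x) then (1:ℝ) else 0) ⁻¹'
        (Set.Iic (α * M)) := by
      ext x
      simp only [hB, Set.mem_setOf_eq, Set.mem_preimage, Set.mem_Iic]
      rw [Finset.card_filter]
      push_cast
      rfl
    rw [heq]
    exact hf measurableSet_Iic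
  set Cst : (Fin n → Bool) → Finset (Fin n → Bool) → Set (Matrix (Fin n) (Fin p) ℝ) :=
    fun a A => {x |
      ((A.filter fun b => g (signMat a * x) ≤ g (signMat b * x)).card : ℝ) ≤ α * M} with hCst
  have hCmeas : ∀ a A, MeasurableSet (Cst a A) := by
    intro a A
    have hf : Measurable fun x : Matrix (Fin n) (Fin p) ℝ =>
        ∑ b ∈ A, if g (signMat a * x) ≤ g (signMat b * x) then (1:ℝ) else 0 := by
      apply Finset.measurable_sum
      intro b _
      exact Measurable.ite
        (measurableSet_le (hg.comp (SubsampleAux.measurable_signMat_mul a))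
          (hg.comp (SubsampleAux.measurable_signMat_mul b)))
        measurable_const measurable_const
    have heq : Cst a A = (fun x =>
        ∑ b ∈ A, if g (signMat a * x) ≤ g (signMat b * x) then (1:ℝ) else 0) ⁻¹'
        (Set.Iic (α * M)) := by
      ext x
      simp only [hCst, Set.mem_setOf_eq, Set.mem_preimage, Set.mem_Iic]
      rw [Finset.card_filter]
      push_cast
      rfl
    rw [heq]
    exact hf measurableSet_Iic
  set V := Finset.univ.filter
    (fun T : Finset (Fin n → Bool) => (fun _ => true) ∈ T ∧ T.card = M) with hV
  set W := Finset.univ.filter (fun A : Finset (Fin n → Bool) => A.card = M) with hW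
  have hMpos : (0:ℝ) < M := by exact_mod_cast hM
  -- coverage
  have hcover : {ω | pvalM ω ≤ α} ⊆ ⋃ T ∈ V, (S ⁻¹' {T} ∩ E ⁻¹' (B T)) := by
    intro ω hω
    simp only [Set.mem_setOf_eq] at hω
    have hmem : S ω ∈ V := by
      simp only [hV, Finset.mem_filter, Finset.mem_univ, true_and]
      exact hSvalid ω
    refine Set.mem_biUnion hmem ⟨rfl, ?_⟩
    show E ω ∈ B (S ω)
    simp only [hB, Set.mem_setOf_eq]
    rw [hpvalM ω, div_le_iff₀ hMpos] at hω
    linarith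
  have hSmeas : ∀ T : Finset (Fin n → Bool), MeasurableSet (S ⁻¹' {T}) :=
    fun T => hS (by trivial)
  have hterm : ∀ T, P (S ⁻¹' {T} ∩ E ⁻¹' (B T)) = P (S ⁻¹' {T}) * μ (B T) := by
    intro T
    rw [hindep.measure_inter_preimage_eq_mul _ _ (by trivial) (hBmeas T), hμ,
      Measure.map_apply hE (hBmeas T)]
  -- nonempty Ω and the constant c
  have hne : Nonempty Ω := by
    by_contra h
    rw [not_nonempty_iff] at h
    have h1 : P Set.univ = 1 := measure_univ
    rw [Set.univ_eq_empty_iff.mpr h, measure_empty] at h1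
    exact zero_ne_one h1
  obtain ⟨ω₀⟩ := hne
  set T₀ := S ω₀ with hT₀def
  set c := P (S ⁻¹' {T₀}) with hc
  have hT₀ := hSvalid ω₀
  have hpre : ∀ T : Finset (Fin n → Bool), S ⁻¹' {T} = {ω | S ω = T} := fun T => rfl
  have hcT : ∀ T ∈ V, P (S ⁻¹' {T}) = c := by
    intro T hT
    simp only [hV, Finset.mem_filter, Finset.mem_univ, true_and] at hT
    rw [hc, hpre, hpre]
    exact hSunif T T₀ hT.1 hT.2 hT₀.1 hT₀.2
  -- c * |V| ≤ 1
  have hdisj : (V : Set (Finset (Fin n → Bool))).PairwiseDisjoint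
      (fun T => S ⁻¹' {T}) := by
    intro T _ T' _ hTT'
    apply Set.disjoint_left.mpr
    intro ω h1 h2
    have h1' : S ω = T := h1
    have h2' : S ω = T' := h2
    exact hTT' (h1'.symm.trans h2')
  have hcV : c * V.card ≤ 1 := by
    have : c * V.card = ∑ T ∈ V, P (S ⁻¹' {T}) := by
      rw [Finset.sum_congr rfl (fun T hT => hcT T hT), Finset.sum_const, nsmul_eq_mul,
        mul_comm]
    rw [this, ← measure_biUnion_finset hdisj (fun T _ => hSmeas T)]
    exact prob_le_one
  -- invariance: μ (B (a • A)) = μ (Cst a A)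
  have hBC : ∀ (a : Fin n → Bool) (A : Finset (Fin n → Bool)),
      μ (B (A.image (SubsampleAux.gmul a))) = μ (Cst a A) := by
    intro a A
    have hmeasA : Measurable fun ω => signMat a * E ω :=
      (SubsampleAux.measurable_signMat_mul a).comp hE
    have hsetpre : (fun ω => signMat a * E ω) ⁻¹' (B (A.image (SubsampleAux.gmul a)))
        = E ⁻¹' (Cst a A) := by
      ext ω
      simp only [Set.mem_preimage, hB, hCst, Set.mem_setOf_eq]
      have hcard : ((A.image (SubsampleAux.gmul a)).filter
          (fun s => g (signMat a * E ω) ≤ g (signMat s * (signMat a * E ω)))).card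
          = (A.filter fun b => g (signMat a * E ω) ≤ g (signMat b * E ω)).card := by
        rw [Finset.filter_image, Finset.card_image_of_injective _
          (SubsampleAux.gmul_injective a)]
        congr 1
        apply Finset.filter_congr
        intro b _
        rw [SubsampleAux.signMat_mul, SubsampleAux.gmul_gmul_right]
      rw [hcard]
    calc μ (B (A.image (SubsampleAux.gmul a)))
        = (P.map (fun ω => signMat a * E ω)) (B (A.image (SubsampleAux.gmul a))) := by
          rw [← hinv a]
      _ = P ((fun ω => signMat a * E ω) ⁻¹' (B (A.image (SubsampleAux.gmul a)))) :=
          Measure.map_apply hmeasA (hBmeas _)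
      _ = P (E ⁻¹' (Cst a A)) := by rw [hsetpre]
      _ = μ (Cst a A) := (Measure.map_apply hE (hCmeas a A)).symm
  -- claim C
  have hclaimC : ∀ A : Finset (Fin n → Bool), A.card = M →
      ∑ a ∈ A, μ (Cst a A) ≤ ENNReal.ofReal α * M := by
    intro A _
    have hpt : ∀ x, (∑ a ∈ A, (Cst a A).indicator (1 : Matrix (Fin n) (Fin p) ℝ → ℝ≥0∞) x)
        ≤ ENNReal.ofReal (α * M) := by
      intro x
      have hind : ∑ a ∈ A, (Cst a A).indicator (1 : Matrix (Fin n) (Fin p) ℝ → ℝ≥0∞) x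
          = ((A.filter fun a => x ∈ Cst a A).card : ℝ≥0∞) := by
        rw [Finset.card_filter]
        push_cast
        refine Finset.sum_congr rfl fun a _ => ?_
        by_cases h : x ∈ Cst a A <;> simp [Set.indicator_apply, h]
      rw [hind]
      have hrank := SubsampleAux.rank_bound A (fun b => g (signMat b * x)) (α * M)
        (mul_nonneg hα0 (Nat.cast_nonneg M))
      have hset : (A.filter fun a => x ∈ Cst a A)
          = A.filter fun a =>
            ((A.filter fun b => g (signMat a * x) ≤ g (signMat b * x)).card : ℝ) ≤ α * M := by
        apply Finset.filter_congr
        intro a _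
        simp only [hCst, Set.mem_setOf_eq]
      rw [hset]
      calc ((A.filter fun a =>
              ((A.filter fun b => g (signMat a * x) ≤ g (signMat b * x)).card : ℝ) ≤ α * M).card
            : ℝ≥0∞)
          = ENNReal.ofReal ((A.filter fun a =>
              ((A.filter fun b => g (signMat a * x) ≤ g (signMat b * x)).card : ℝ) ≤ α * M).card
            : ℝ) := by rw [ENNReal.ofReal_natCast]
        _ ≤ ENNReal.ofReal (α * M) := ENNReal.ofReal_le_ofReal hrank
    calc ∑ a ∈ A, μ (Cst a A)
        = ∑ a ∈ A, ∫⁻ x, (Cst a A).indicator (1 : Matrix (Fin n) (Fin p) ℝ → ℝ≥0∞) x ∂μ := by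
          refine Finset.sum_congr rfl fun a _ => ?_
          rw [lintegral_indicator_one (hCmeas a A)]
      _ = ∫⁻ x, ∑ a ∈ A, (Cst a A).indicator (1 : Matrix (Fin n) (Fin p) ℝ → ℝ≥0∞) x ∂μ :=
          (lintegral_finset_sum _ (fun a _ => measurable_one.indicator (hCmeas a A))).symm
      _ ≤ ∫⁻ _x, ENNReal.ofReal (α * M) ∂μ := lintegral_mono hpt
      _ = ENNReal.ofReal (α * M) := by rw [lintegral_const, measure_univ, mul_one]
      _ = ENNReal.ofReal α * M := by rw [ENNReal.ofReal_mul hα0, ENNReal.ofReal_natCast]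
  -- double counting lemma instances
  have hdc := SubsampleAux.double_count M (fun _ => true) SubsampleAux.gmul
    SubsampleAux.gmul_gmul SubsampleAux.gmul_self SubsampleAux.gmul_id
    (fun T => μ (B T))
  have hdc1 := SubsampleAux.double_count (σ := Fin n → Bool) M (fun _ => true)
    SubsampleAux.gmul SubsampleAux.gmul_gmul SubsampleAux.gmul_self SubsampleAux.gmul_id
    (fun _ => (1 : ℝ≥0∞))
  rw [← hV, ← hW] at hdc hdc1
  set K : ℝ≥0∞ := (Fintype.card (Fin n → Bool) : ℝ≥0∞) with hK
  have hK0 : K ≠ 0 := by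
    simp only [hK, Ne, Nat.cast_eq_zero]
    exact Fintype.card_ne_zero
  have hKtop : K ≠ ⊤ := by simp [hK]
  -- key bound
  have key : ∑ T ∈ V, μ (B T) ≤ ENNReal.ofReal α * V.card := by
    have hsum1 : ∑ A ∈ W, ∑ a ∈ A, (1:ℝ≥0∞) = W.card * M := by
      rw [Finset.sum_congr rfl (fun A hA => ?_), Finset.sum_const, nsmul_eq_mul]
      rw [Finset.sum_const, nsmul_eq_mul, mul_one]
      simp only [hW, Finset.mem_filter, Finset.mem_univ, true_and] at hA
      rw [hA]
    have hL : K * ∑ T ∈ V, μ (B T) ≤ K * (ENNReal.ofReal α * V.card) := by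
      rw [hK, hdc]
      calc ∑ A ∈ W, ∑ a ∈ A, μ (B (A.image (SubsampleAux.gmul a)))
          = ∑ A ∈ W, ∑ a ∈ A, μ (Cst a A) := by
            refine Finset.sum_congr rfl fun A _ => Finset.sum_congr rfl fun a _ => ?_
            exact hBC a A
        _ ≤ ∑ A ∈ W, ENNReal.ofReal α * M := by
            refine Finset.sum_le_sum fun A hA => ?_
            simp only [hW, Finset.mem_filter, Finset.mem_univ, true_and] at hA
            exact hclaimC A hA
        _ = W.card * (ENNReal.ofReal α * M) := by
            rw [Finset.sum_const, nsmul_eq_mul]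
        _ = ENNReal.ofReal α * (W.card * M) := by ring
        _ = ENNReal.ofReal α * ∑ A ∈ W, ∑ a ∈ A, (1:ℝ≥0∞) := by rw [hsum1]
        _ = ENNReal.ofReal α * ((Fintype.card (Fin n → Bool) : ℝ≥0∞) * ∑ T ∈ V, (1:ℝ≥0∞)) := by
            rw [← hdc1]
        _ = (Fintype.card (Fin n → Bool) : ℝ≥0∞) * (ENNReal.ofReal α * V.card) := by
            rw [Finset.sum_const, nsmul_eq_mul, mul_one]
            ring
    exact (ENNReal.mul_le_mul_iff_right hK0 hKtop).mp hL
  -- final assembly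
  calc P {ω | pvalM ω ≤ α}
      ≤ P (⋃ T ∈ V, (S ⁻¹' {T} ∩ E ⁻¹' (B T))) := measure_mono hcover
    _ ≤ ∑ T ∈ V, P (S ⁻¹' {T} ∩ E ⁻¹' (B T)) := measure_biUnion_finset_le _ _
    _ = ∑ T ∈ V, c * μ (B T) := Finset.sum_congr rfl fun T hT => by
        rw [hterm T, hcT T hT]
    _ = c * ∑ T ∈ V, μ (B T) := by rw [Finset.mul_sum]
    _ ≤ c * (ENNReal.ofReal α * V.card) := mul_le_mul_right key c
    _ = ENNReal.ofReal α * (c * V.card) := by ring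
    _ ≤ ENNReal.ofReal α * 1 := mul_le_mul_right hcV _
    _ = ENNReal.ofReal α := mul_one _
end

section
/- Let λ̂ be a minimizer of ‖ι − Xλ‖₂² over λ ≥ 0, and suppose Xλ̂ ≠ 0 and ι'Xλ̂ > 0. Then λ̂ attains the maximum of ι'Xλ/√(λ'X'Xλ) over {λ ≥ 0 : λ'X'Xλ > 0}; i.e. the nonnegative least squares solution maximizes the one-sided normalized statistic. -/
open Matrix

/-- If `c ≤ t * b` for all `t ∈ (0,1)` and `0 ≤ b`, then `c ≤ 0`. -/
lemma aux_small_t {b c : ℝ} (hb : 0 ≤ b) (h : ∀ t : ℝ, 0 < t → t < 1 → c ≤ t * b) :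
    c ≤ 0 := by
  by_contra hc
  push_neg at hc
  have ht1 : (0:ℝ) < min (1/2) (c / (2 * (b + 1))) := by
    apply lt_min (by norm_num)
    positivity
  have ht2 : min (1/2) (c / (2 * (b + 1))) < 1 := lt_of_le_of_lt (min_le_left _ _) (by norm_num)
  have := h _ ht1 ht2
  have hle : min (1/2) (c / (2 * (b + 1))) * b ≤ (c / (2 * (b + 1))) * b :=
    mul_le_mul_of_nonneg_right (min_le_right _ _) hb
  have : c ≤ (c / (2 * (b + 1))) * b := le_trans this hle
  rw [div_mul_eq_mul_div, le_div_iff₀ (by positivity : (0:ℝ) < 2 * (b + 1))] at this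
  nlinarith

/-- Let λ̂ be a minimizer of ‖ι − Xλ‖₂² over λ ≥ 0, with Xλ̂ ≠ 0 and ι'Xλ̂ > 0.
Assume the existence condition: λ'X'Xλ > 0 for all λ ≥ 0, λ ≠ 0 with ι'Xλ > 0.
Then λ̂ maximizes ι'Xλ/√(λ'X'Xλ) over {λ ≥ 0 : λ'X'Xλ > 0}. -/
theorem nnls_maximizes_onesided_statistic
    {n p : ℕ} (X : Matrix (Fin n) (Fin p) ℝ)
    (ι : Fin n → ℝ) (hι : ι = fun _ => 1)
    (lhat : Fin p → ℝ) (hlhat : ∀ i, 0 ≤ lhat i)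
    (hmin : ∀ l : Fin p → ℝ, (∀ i, 0 ≤ l i) →
      ∑ i, (ι i - (X *ᵥ lhat) i) ^ 2 ≤ ∑ i, (ι i - (X *ᵥ l) i) ^ 2)
    (hXlhat : X *ᵥ lhat ≠ 0) (hnum : 0 < ι ⬝ᵥ (X *ᵥ lhat))
    (hcond : ∀ l : Fin p → ℝ, (∀ i, 0 ≤ l i) → l ≠ 0 → 0 < ι ⬝ᵥ (X *ᵥ l) →
      0 < (X *ᵥ l) ⬝ᵥ (X *ᵥ l)) :
    ∀ l : Fin p → ℝ, (∀ i, 0 ≤ l i) → 0 < (X *ᵥ l) ⬝ᵥ (X *ᵥ l) →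
      (ι ⬝ᵥ (X *ᵥ l)) / Real.sqrt ((X *ᵥ l) ⬝ᵥ (X *ᵥ l)) ≤
      (ι ⬝ᵥ (X *ᵥ lhat)) / Real.sqrt ((X *ᵥ lhat) ⬝ᵥ (X *ᵥ lhat)) := by
  intro l hl hd
  set v : Fin n → ℝ := X *ᵥ lhat with hv
  set u : Fin n → ℝ := X *ᵥ l with hu
  -- expansion lemma
  have expand : ∀ (w : Fin n → ℝ) (t : ℝ),
      ∑ i, (ι i - (v i + t * w i)) ^ 2 =
      ∑ i, (ι i - v i) ^ 2 - 2 * t * (∑ i, w i * (ι i - v i)) + t ^ 2 * ∑ i, w i ^ 2 := by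
    intro w t
    have h1 : ∀ i : Fin n, (ι i - (v i + t * w i)) ^ 2 =
        (ι i - v i) ^ 2 - 2 * t * (w i * (ι i - v i)) + t ^ 2 * w i ^ 2 := fun i => by ring
    simp_rw [h1, Finset.sum_add_distrib, Finset.sum_sub_distrib, ← Finset.mul_sum]
  -- KKT-type inequality: for any nonneg direction l', ∑ (Xl') i * (ι - v) i ≤ 0
  have kkt : ∀ (l' : Fin p → ℝ), (∀ i, 0 ≤ l' i) →
      ∑ i, (X *ᵥ l') i * (ι i - v i) ≤ 0 := by
    intro l' hl'
    set w : Fin n → ℝ := X *ᵥ l' with hw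
    have hb : (0:ℝ) ≤ ∑ i, w i ^ 2 := Finset.sum_nonneg fun i _ => sq_nonneg _
    have key : ∀ t : ℝ, 0 < t → t < 1 →
        2 * (∑ i, w i * (ι i - v i)) ≤ t * ∑ i, w i ^ 2 := by
      intro t ht0 ht1
      have hfeas : ∀ i, 0 ≤ (lhat + t • l') i := fun i => by
        simp only [Pi.add_apply, Pi.smul_apply, smul_eq_mul]
        have := hl' i
        nlinarith [hlhat i]
      have h2 := hmin _ hfeas
      have h3 : ∀ i, (X *ᵥ (lhat + t • l')) i = v i + t * w i := by
        intro i
        rw [mulVec_add, mulVec_smul]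
        simp [hv, hw]
      simp_rw [h3, expand w t] at h2
      nlinarith
    have := aux_small_t hb key
    linarith
  -- complementarity: ∑ v i * (ι - v) i = 0
  have comp_le : ∑ i, v i * (ι i - v i) ≤ 0 := kkt lhat hlhat
  have comp_ge : 0 ≤ ∑ i, v i * (ι i - v i) := by
    have hb : (0:ℝ) ≤ ∑ i, v i ^ 2 := Finset.sum_nonneg fun i _ => sq_nonneg _
    have key : ∀ t : ℝ, 0 < t → t < 1 →
        2 * (-∑ i, v i * (ι i - v i)) ≤ t * ∑ i, v i ^ 2 := by
      intro t ht0 ht1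
      have hfeas : ∀ i, 0 ≤ ((1 - t) • lhat) i := fun i => by
        simp only [Pi.smul_apply, smul_eq_mul]
        have := hlhat i
        nlinarith
      have h2 := hmin _ hfeas
      have h3 : ∀ i, (X *ᵥ ((1 - t) • lhat)) i = v i + (-t) * v i := by
        intro i
        rw [mulVec_smul]
        simp [hv]
        ring
      simp_rw [h3, expand v (-t)] at h2
      nlinarith
    have := aux_small_t hb key
    linarith
  have comp : ∑ i, v i * (ι i - v i) = 0 := le_antisymm comp_le comp_ge
  -- so ι ⬝ v = v ⬝ v
  have hdot : ∀ (a b : Fin n → ℝ), a ⬝ᵥ b = ∑ i, a i * b i := fun a b => rfl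
  have hιv : ι ⬝ᵥ v = v ⬝ᵥ v := by
    rw [hdot, hdot]
    have : ∀ i : Fin n, v i * (ι i - v i) = v i * ι i - v i * v i := fun i => by ring
    simp_rw [this, Finset.sum_sub_distrib, sub_eq_zero] at comp
    rw [← comp]
    exact Finset.sum_congr rfl fun i _ => mul_comm _ _
  have hc : 0 < v ⬝ᵥ v := by rw [← hιv]; exact hnum
  -- numerator bound: ι ⬝ u ≤ u ⬝ v ≤ √(u⬝u) √(v⬝v)
  have hub : ι ⬝ᵥ u ≤ ∑ i, u i * v i := by
    have : ∑ i, u i * (ι i - v i) ≤ 0 := kkt l hl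
    rw [hdot]
    have h1 : ∀ i : Fin n, u i * (ι i - v i) = u i * ι i - u i * v i := fun i => by ring
    simp_rw [h1, Finset.sum_sub_distrib] at this
    have h2 : ∑ i, ι i * u i = ∑ i, u i * ι i :=
      Finset.sum_congr rfl fun i _ => mul_comm _ _
    linarith
  have hcs : ∑ i, u i * v i ≤ Real.sqrt (∑ i, u i ^ 2) * Real.sqrt (∑ i, v i ^ 2) :=
    Real.sum_mul_le_sqrt_mul_sqrt _ _ _
  have huu : u ⬝ᵥ u = ∑ i, u i ^ 2 := by
    rw [hdot]; exact Finset.sum_congr rfl fun i _ => (sq (u i)).symm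
  have hvv : v ⬝ᵥ v = ∑ i, v i ^ 2 := by
    rw [hdot]; exact Finset.sum_congr rfl fun i _ => (sq (v i)).symm
  -- conclude
  have hsd : 0 < Real.sqrt (u ⬝ᵥ u) := Real.sqrt_pos.mpr hd
  have hsc : 0 < Real.sqrt (v ⬝ᵥ v) := Real.sqrt_pos.mpr hc
  rw [hιv, Real.div_sqrt, div_le_iff₀ hsd]
  calc ι ⬝ᵥ u ≤ Real.sqrt (u ⬝ᵥ u) * Real.sqrt (v ⬝ᵥ v) := by
        rw [huu, hvv]; exact le_trans hub hcs
    _ = Real.sqrt (v ⬝ᵥ v) * Real.sqrt (u ⬝ᵥ u) := mul_comm _ _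
end
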